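/- arXiv:2402.11967 — 3 statements merged into one kernel-verified Lean document; each statement's English description precedes it below -/
import Mathlib

section
/- The exponent −1/4 in the upper bound for I^R_{α,β}(σ) is optimal in the following scale-invariant sense: there exist constants c₀ > 0 and σ₀ > 0 such that for every α > 0, every R ≥ (√3/√2) α and every σ ≥ σ₀ α², one has sup_{β ∈ [0,∞)} I^R_{α,β}(σ) ≥ c₀ σ^{−1/4} α^{3/2}, where I^R_{α,β}(σ) = ∫₀^{√(R²−α²)} dx / (1 + σ (f_α(x) − β)²). -/
/-- The phase derivative `f_α(x) = α x / (α² + x²)^{3/2}`. -/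
noncomputable def fPhase (α x : ℝ) : ℝ := α * x / (α ^ 2 + x ^ 2) ^ (3 / 2 : ℝ)

/-- The integral `I^R_{α,β}(σ) = ∫₀^{√(R²−α²)} dx / (1 + σ (f_α(x) − β)²)`. -/
noncomputable def Iint (α β R σ : ℝ) : ℝ :=
  ∫ x in (0 : ℝ)..(Real.sqrt (R ^ 2 - α ^ 2)), 1 / (1 + σ * (fPhase α x - β) ^ 2)

lemma fPhase_cont (α : ℝ) (hα : 0 < α) : Continuous (fPhase α) := by
  unfold fPhase
  apply Continuous.div
  · exact continuous_const.mul continuous_id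
  · exact (continuous_const.add (continuous_pow 2)).rpow_const (fun x => Or.inr (by norm_num))
  · intro x
    have : (0:ℝ) < α ^ 2 + x ^ 2 := by positivity
    positivity

lemma fPhase_hasDeriv (α : ℝ) (hα : 0 < α) (x : ℝ) :
    HasDerivAt (fPhase α)
      (α * (α ^ 2 - 2 * x ^ 2) / ((α ^ 2 + x ^ 2) ^ 2 * (α ^ 2 + x ^ 2) ^ ((1:ℝ)/2))) x := by
  have hu : (0:ℝ) < α ^ 2 + x ^ 2 := by positivity
  have h1 : HasDerivAt (fun y : ℝ => α ^ 2 + y ^ 2) (2 * x) x := by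
    simpa using (hasDerivAt_pow 2 x).const_add (α ^ 2)
  have h2 : HasDerivAt (fun y : ℝ => (α ^ 2 + y ^ 2) ^ ((3:ℝ)/2))
      ((2 * x) * ((3:ℝ)/2) * (α ^ 2 + x ^ 2) ^ ((3:ℝ)/2 - 1)) x :=
    h1.rpow_const (Or.inr (by norm_num))
  have h3 : HasDerivAt (fun y : ℝ => α * y) α x := by
    simpa using (hasDerivAt_id x).const_mul α
  have h4 := h3.div h2 (by positivity)
  have hgoal : HasDerivAt (fun y => fPhase α y)
      ((α * (α ^ 2 + x ^ 2) ^ ((3:ℝ)/2) - α * x * ((2 * x) * ((3:ℝ)/2) * (α ^ 2 + x ^ 2) ^ ((3:ℝ)/2 - 1))) /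
        ((α ^ 2 + x ^ 2) ^ ((3:ℝ)/2)) ^ 2) x := by
    exact h4
  convert hgoal using 1
  set u : ℝ := α ^ 2 + x ^ 2 with hu_def
  set w : ℝ := u ^ ((1:ℝ)/2) with hw_def
  have hwpos : 0 < w := Real.rpow_pos_of_pos hu _
  have hw2 : w ^ 2 = u := by
    rw [hw_def, ← Real.rpow_natCast (u ^ ((1:ℝ)/2)) 2, ← Real.rpow_mul hu.le]
    norm_num
  have h32 : u ^ ((3:ℝ)/2) = u * w := by
    rw [show (3:ℝ)/2 = 1 + 1/2 by norm_num, Real.rpow_add hu, Real.rpow_one, hw_def]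
  have hexp : (3:ℝ)/2 - 1 = 1/2 := by norm_num
  rw [hexp, h32, ← hw_def]
  rw [div_eq_div_iff (by positivity) (by positivity)]
  nlinarith [hw2, sq_nonneg w, hwpos]

set_option maxHeartbeats 1600000 in
/-- Optimality of the exponent `−1/4`: there exist `c₀, σ₀ > 0` such that for every `α > 0`,
`R ≥ (√3/√2) α` and `σ ≥ σ₀ α²`, one has `sup_{β ≥ 0} I^R_{α,β}(σ) ≥ c₀ σ^{−1/4} α^{3/2}`. -/
theorem statement6 :
    ∃ c₀ > (0 : ℝ), ∃ σ₀ > (0 : ℝ), ∀ α R σ : ℝ, 0 < α →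
      Real.sqrt 3 / Real.sqrt 2 * α ≤ R → σ₀ * α ^ 2 ≤ σ →
      c₀ * σ ^ (-(1 / 4) : ℝ) * α ^ (3 / 2 : ℝ) ≤ ⨆ β : {b : ℝ // 0 ≤ b}, Iint α β.1 R σ := by
  refine ⟨1/4, by norm_num, 1, by norm_num, ?_⟩
  intro α R σ hα hR hσ
  have hσpos : (0:ℝ) < σ := lt_of_lt_of_le (by positivity) hσ
  set s : ℝ := α ^ ((1:ℝ)/2) with hs_def
  set t : ℝ := σ ^ ((1:ℝ)/4) with ht_def
  have hs : 0 < s := Real.rpow_pos_of_pos hα _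
  have ht : 0 < t := Real.rpow_pos_of_pos hσpos _
  have hs2 : s ^ 2 = α := by
    rw [hs_def, ← Real.rpow_natCast (α ^ ((1:ℝ)/2)) 2, ← Real.rpow_mul hα.le]; norm_num
  have ht4 : t ^ 4 = σ := by
    rw [ht_def, ← Real.rpow_natCast (σ ^ ((1:ℝ)/4)) 4, ← Real.rpow_mul hσpos.le]; norm_num
  have hst : s ≤ t := by
    have h1 : (α ^ 2 : ℝ) ^ ((1:ℝ)/4) = s := by
      rw [hs_def, ← Real.rpow_natCast α 2, ← Real.rpow_mul hα.le]; norm_num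
    rw [← h1, ht_def]
    exact Real.rpow_le_rpow (by positivity) (by linarith) (by norm_num)
  have h2s : Real.sqrt 2 ^ 2 = 2 := Real.sq_sqrt (by norm_num)
  have h2pos : (0:ℝ) < Real.sqrt 2 := Real.sqrt_pos.2 (by norm_num)
  have h2le : Real.sqrt 2 ≤ 2 := by nlinarith
  set x₀ : ℝ := α / Real.sqrt 2 with hx₀_def
  set δ : ℝ := α * s / (2 * t) with hδ_def
  have hδpos : 0 < δ := by positivity
  have hx₀pos : 0 < x₀ := by positivity
  have hδx₀ : δ ≤ x₀ := by
    rw [hδ_def, hx₀_def, div_le_div_iff₀ (by positivity) h2pos]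
    nlinarith [mul_le_mul_of_nonneg_left (mul_le_mul hst h2le h2pos.le ht.le) hα.le]
  have hx₀sq : 2 * x₀ ^ 2 = α ^ 2 := by
    rw [hx₀_def, div_pow, h2s]; ring
  set β : ℝ := fPhase α x₀ with hβ_def
  have hβ0 : 0 ≤ β := by
    rw [hβ_def]; unfold fPhase
    have : (0:ℝ) < α ^ 2 + x₀ ^ 2 := by positivity
    positivity
  set b : ℝ := Real.sqrt (R ^ 2 - α ^ 2) with hb_def
  have hbnn : 0 ≤ b := Real.sqrt_nonneg _
  have hR2 : 3/2 * α ^ 2 ≤ R ^ 2 := by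
    have h3s : Real.sqrt 3 ^ 2 = 3 := Real.sq_sqrt (by norm_num)
    have h3pos : (0:ℝ) < Real.sqrt 3 := Real.sqrt_pos.2 (by norm_num)
    have hRpos : 0 ≤ Real.sqrt 3 / Real.sqrt 2 * α := by positivity
    have key : (Real.sqrt 3 / Real.sqrt 2 * α) ^ 2 = 3/2 * α ^ 2 := by
      rw [mul_pow, div_pow, h3s, h2s]
    have h := pow_le_pow_left₀ hRpos hR 2
    linarith [key ▸ h]
  have hx₀b : x₀ ≤ b := by
    rw [hb_def]
    rw [show x₀ = Real.sqrt (x₀ ^ 2) from (Real.sqrt_sq hx₀pos.le).symm]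
    apply Real.sqrt_le_sqrt
    nlinarith
  -- continuity and integrability of the integrand
  have hgc : ∀ β' : ℝ, Continuous fun x => 1 / (1 + σ * (fPhase α x - β') ^ 2) := by
    intro β'
    apply Continuous.div continuous_const
    · exact continuous_const.add (continuous_const.mul (((fPhase_cont α hα).sub continuous_const).pow 2))
    · intro x; positivity
  have hgi : ∀ β' a c : ℝ, IntervalIntegrable (fun x => 1 / (1 + σ * (fPhase α x - β') ^ 2))
      MeasureTheory.volume a c := fun β' a c => (hgc β').intervalIntegrable a c
  -- bounded above
  have hBdd : BddAbove (Set.range fun β' : {b : ℝ // 0 ≤ b} => Iint α β'.1 R σ) := by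
    refine ⟨b, ?_⟩
    rintro _ ⟨β', rfl⟩
    unfold Iint
    calc (∫ x in (0:ℝ)..b, 1 / (1 + σ * (fPhase α x - β'.1) ^ 2))
        ≤ ∫ x in (0:ℝ)..b, (1:ℝ) := by
          apply intervalIntegral.integral_mono_on hbnn (hgi _ _ _) intervalIntegrable_const
          intro x _
          rw [div_le_one (by positivity)]
          nlinarith [sq_nonneg (fPhase α x - β'.1), hσpos.le]
      _ = b := by simp
  refine le_trans ?_ (le_ciSup hBdd ⟨β, hβ0⟩)
  -- rewrite the LHS as δ / 2
  have hLHS : (1/4 : ℝ) * σ ^ (-(1 / 4) : ℝ) * α ^ (3 / 2 : ℝ) = δ / 2 := by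
    have e1 : σ ^ (-(1 / 4) : ℝ) = 1 / t := by
      rw [ht_def, Real.rpow_neg hσpos.le]; norm_num
    have e2 : α ^ (3 / 2 : ℝ) = α * s := by
      rw [show (3/2 : ℝ) = 1 + 1/2 by norm_num, Real.rpow_add hα, Real.rpow_one, hs_def]
    rw [e1, e2, hδ_def]
    field_simp
    ring
  rw [hLHS]
  -- the key pointwise bound on [x₀ - δ, x₀]
  set C : ℝ := 4 * δ * x₀ / α ^ 4 with hC_def
  have hCpos : 0 < C := by positivity
  have hbound : ∀ y ∈ Set.Icc (x₀ - δ) x₀,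
      ‖α * (α ^ 2 - 2 * y ^ 2) / ((α ^ 2 + y ^ 2) ^ 2 * (α ^ 2 + y ^ 2) ^ ((1:ℝ)/2))‖ ≤ C := by
    intro y hy
    obtain ⟨hy1, hy2⟩ := hy
    have hy0 : 0 ≤ y := by linarith
    have hupos : (0:ℝ) < α ^ 2 + y ^ 2 := by positivity
    have hnum0 : 0 ≤ α ^ 2 - 2 * y ^ 2 := by nlinarith
    have key : (x₀ - y) * (x₀ + y) ≤ δ * (2 * x₀) :=
      mul_le_mul (by linarith) (by linarith) (by linarith) hδpos.le
    have hnum : α * (α ^ 2 - 2 * y ^ 2) ≤ 4 * α * δ * x₀ := by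
      nlinarith [mul_le_mul_of_nonneg_left key (show (0:ℝ) ≤ 2 * α by linarith), hx₀sq, hα]
    have hden : α ^ 5 ≤ (α ^ 2 + y ^ 2) ^ 2 * (α ^ 2 + y ^ 2) ^ ((1:ℝ)/2) := by
      have h1 : α ≤ (α ^ 2 + y ^ 2) ^ ((1:ℝ)/2) := by
        have : (α ^ 2 : ℝ) ^ ((1:ℝ)/2) = α := by
          rw [← Real.rpow_natCast α 2, ← Real.rpow_mul hα.le]; norm_num
        rw [← this]
        exact Real.rpow_le_rpow (by positivity) (by nlinarith) (by norm_num)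
      have h2 : α ^ 4 ≤ (α ^ 2 + y ^ 2) ^ 2 := by nlinarith
      calc α ^ 5 = α ^ 4 * α := by ring
        _ ≤ (α ^ 2 + y ^ 2) ^ 2 * (α ^ 2 + y ^ 2) ^ ((1:ℝ)/2) :=
          mul_le_mul h2 h1 hα.le (by positivity)
    rw [Real.norm_eq_abs, abs_of_nonneg (by positivity)]
    calc α * (α ^ 2 - 2 * y ^ 2) / ((α ^ 2 + y ^ 2) ^ 2 * (α ^ 2 + y ^ 2) ^ ((1:ℝ)/2))
        ≤ 4 * α * δ * x₀ / α ^ 5 := by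
          apply div_le_div₀ (by positivity) hnum (by positivity) hden
      _ = C := by rw [hC_def]; field_simp
  have hMVT : ∀ x ∈ Set.Icc (x₀ - δ) x₀, |fPhase α x - β| ≤ C * δ := by
    intro x hx
    have hx₀mem : x₀ ∈ Set.Icc (x₀ - δ) x₀ := ⟨by linarith, le_refl _⟩
    have key := Convex.norm_image_sub_le_of_norm_hasDerivWithin_le
      (f := fPhase α)
      (f' := fun y => α * (α ^ 2 - 2 * y ^ 2) / ((α ^ 2 + y ^ 2) ^ 2 * (α ^ 2 + y ^ 2) ^ ((1:ℝ)/2)))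
      (fun y _ => (fPhase_hasDeriv α hα y).hasDerivWithinAt) hbound
      (convex_Icc _ _) hx₀mem hx
    rw [hβ_def]
    have hxd : ‖x - x₀‖ ≤ δ := by
      rw [Real.norm_eq_abs, abs_le]
      constructor <;> [linarith [hx.1]; linarith [hx.2]]
    calc |fPhase α x - fPhase α x₀| = ‖fPhase α x - fPhase α x₀‖ := rfl
      _ ≤ C * ‖x - x₀‖ := key
      _ ≤ C * δ := by nlinarith
  -- σ (C δ)² = 1/2
  have h2tδ : 2 * t * δ = α * s := by rw [hδ_def]; field_simp
  have h16 : 16 * σ * δ ^ 4 = α ^ 6 := by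
    have h4 : (2 * t * δ) ^ 4 = (α * s) ^ 4 := by rw [h2tδ]
    calc 16 * σ * δ ^ 4 = (2 * t * δ) ^ 4 := by rw [← ht4]; ring
      _ = (α * s) ^ 4 := h4
      _ = α ^ 4 * (s ^ 2) ^ 2 := by ring
      _ = α ^ 6 := by rw [hs2]; ring
  have hCd : σ * (C * δ) ^ 2 = 1 / 2 := by
    rw [hC_def]
    have hx2 : x₀ ^ 2 = α ^ 2 / 2 := by nlinarith [hx₀sq]
    field_simp
    linear_combination 2 * x₀ ^ 2 * h16 + 2 * α ^ 6 * hx2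
  -- pointwise lower bound 1/2 on the integrand
  have hpt : ∀ x ∈ Set.Icc (x₀ - δ) x₀, (1/2 : ℝ) ≤ 1 / (1 + σ * (fPhase α x - β) ^ 2) := by
    intro x hx
    have h1 := hMVT x hx
    have hq : σ * (fPhase α x - β) ^ 2 ≤ 1 / 2 := by
      rw [← hCd]
      have : (fPhase α x - β) ^ 2 ≤ (C * δ) ^ 2 := by
        rw [← sq_abs (fPhase α x - β)]
        exact pow_le_pow_left₀ (abs_nonneg _) h1 2
      nlinarith [hσpos.le]
    have hd : (0:ℝ) < 1 + σ * (fPhase α x - β) ^ 2 := by positivity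
    rw [show (1/2 : ℝ) = 1 / 2 from rfl]
    apply one_div_le_one_div_of_le hd
    linarith
  -- integral lower bound
  have hmid : δ / 2 ≤ ∫ x in (x₀ - δ)..x₀, 1 / (1 + σ * (fPhase α x - β) ^ 2) := by
    have := intervalIntegral.integral_mono_on (by linarith : x₀ - δ ≤ x₀)
      intervalIntegrable_const (hgi β _ _) hpt
    have hc : (∫ _ in (x₀ - δ)..x₀, (1/2 : ℝ)) = δ / 2 := by
      simp; ring
    linarith [hc ▸ this]
  have e1 : (∫ x in (0:ℝ)..(x₀ - δ), 1 / (1 + σ * (fPhase α x - β) ^ 2)) +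
      (∫ x in (x₀ - δ)..b, 1 / (1 + σ * (fPhase α x - β) ^ 2)) =
      ∫ x in (0:ℝ)..b, 1 / (1 + σ * (fPhase α x - β) ^ 2) :=
    intervalIntegral.integral_add_adjacent_intervals (hgi β _ _) (hgi β _ _)
  have e2 : (∫ x in (x₀ - δ)..x₀, 1 / (1 + σ * (fPhase α x - β) ^ 2)) +
      (∫ x in x₀..b, 1 / (1 + σ * (fPhase α x - β) ^ 2)) =
      ∫ x in (x₀ - δ)..b, 1 / (1 + σ * (fPhase α x - β) ^ 2) :=
    intervalIntegral.integral_add_adjacent_intervals (hgi β _ _) (hgi β _ _)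
  have n1 : 0 ≤ ∫ x in (0:ℝ)..(x₀ - δ), 1 / (1 + σ * (fPhase α x - β) ^ 2) := by
    apply intervalIntegral.integral_nonneg (by linarith)
    intro u _; positivity
  have n2 : 0 ≤ ∫ x in x₀..b, 1 / (1 + σ * (fPhase α x - β) ^ 2) := by
    apply intervalIntegral.integral_nonneg hx₀b
    intro u _; positivity
  unfold Iint
  rw [← hb_def]
  linarith
end

section
/- Let ν > 0, set ν' = ν, let ε > 0 and let ξ ∈ ℝ³ with ξ_h ≠ 0. Then the matrix 𝔹(ξ,ε) is diagonalizable over ℂ and its eigenvalues, counted with multiplicity, are exactly 0, −ν|ξ|², −ν|ξ|² + i|ξ_h|/(ε|ξ|) and −ν|ξ|² − i|ξ_h|/(ε|ξ|). -/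
open Matrix

theorem det_fin_four' {R : Type*} [CommRing R] (A : Matrix (Fin 4) (Fin 4) R) :
    det A =
      A 0 0*A 1 1*A 2 2*A 3 3 - A 0 0*A 1 1*A 2 3*A 3 2 - A 0 0*A 1 2*A 2 1*A 3 3 + A 0 0*A 1 2*A 2 3*A 3 1 + A 0 0*A 1 3*A 2 1*A 3 2 - A 0 0*A 1 3*A 2 2*A 3 1 - A 0 1*A 1 0*A 2 2*A 3 3 + A 0 1*A 1 0*A 2 3*A 3 2 + A 0 1*A 1 2*A 2 0*A 3 3 - A 0 1*A 1 2*A 2 3*A 3 0 - A 0 1*A 1 3*A 2 0*A 3 2 + A 0 1*A 1 3*A 2 2*A 3 0 + A 0 2*A 1 0*A 2 1*A 3 3 - A 0 2*A 1 0*A 2 3*A 3 1 - A 0 2*A 1 1*A 2 0*A 3 3 + A 0 2*A 1 1*A 2 3*A 3 0 + A 0 2*A 1 3*A 2 0*A 3 1 - A 0 2*A 1 3*A 2 1*A 3 0 - A 0 3*A 1 0*A 2 1*A 3 2 + A 0 3*A 1 0*A 2 2*A 3 1 + A 0 3*A 1 1*A 2 0*A 3 2 - A 0 3*A 1 1*A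 2 2*A 3 0 - A 0 3*A 1 2*A 2 0*A 3 1 + A 0 3*A 1 2*A 2 1*A 3 0 := by
  rw [det_succ_row_zero]
  simp only [Fin.sum_univ_succ, det_fin_three, submatrix_apply, Fin.succAbove, Fin.sum_univ_zero]
  norm_num [Fin.lt_def, Fin.succ]
  simp only [show (⟨2, by norm_num⟩ : Fin 4) = 2 from rfl, show (⟨3, by norm_num⟩ : Fin 4) = 3 from rfl,
    show Fin.castSucc 2 = (2 : Fin 4) from rfl]
  ring

theorem vecHead_const {α : Type*} {n : ℕ} (c : α) :
    Matrix.vecHead (fun _ : Fin (n+1) => c) = c := rfl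

theorem vecTail_const {α : Type*} {n : ℕ} (c : α) :
    Matrix.vecTail (fun _ : Fin (n+1) => c) = fun _ => c := rfl

/-- The symbol `𝔹(ξ,ε)` of the linearized strongly stratified Boussinesq system. -/
noncomputable def Bmat (ν ν' ε ξ₁ ξ₂ ξ₃ : ℝ) : Matrix (Fin 4) (Fin 4) ℝ :=
  !![-ν * (ξ₂ ^ 2 + ξ₃ ^ 2), ν * ξ₁ * ξ₂, ν * ξ₁ * ξ₃,
      ξ₁ * ξ₃ / (ε * (ξ₁ ^ 2 + ξ₂ ^ 2 + ξ₃ ^ 2));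
     ν * ξ₁ * ξ₂, -ν * (ξ₁ ^ 2 + ξ₃ ^ 2), ν * ξ₂ * ξ₃,
      ξ₂ * ξ₃ / (ε * (ξ₁ ^ 2 + ξ₂ ^ 2 + ξ₃ ^ 2));
     ν * ξ₁ * ξ₃, ν * ξ₂ * ξ₃, -ν * (ξ₁ ^ 2 + ξ₂ ^ 2),
      -(ξ₁ ^ 2 + ξ₂ ^ 2) / (ε * (ξ₁ ^ 2 + ξ₂ ^ 2 + ξ₃ ^ 2));
     0, 0, 1 / ε, -ν' * (ξ₁ ^ 2 + ξ₂ ^ 2 + ξ₃ ^ 2)]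

/-- Matrix of eigenvectors of `𝔹(ξ,ε)` (with `z` standing for `|ξ_h| |ξ|`). -/
noncomputable def Pmat (ν ε ξ₁ ξ₂ ξ₃ : ℝ) (z : ℂ) : Matrix (Fin 4) (Fin 4) ℂ :=
  !![((ξ₁*((ξ₁^2+ξ₂^2+ξ₃^2) + ε^2*ν^2*(ξ₁^2+ξ₂^2+ξ₃^2)^3) : ℝ) : ℂ), ((-ξ₂ : ℝ) : ℂ), ((ξ₁*ξ₃ : ℝ) : ℂ), ((ξ₁*ξ₃ : ℝ) : ℂ);
     ((ξ₂*((ξ₁^2+ξ₂^2+ξ₃^2) + ε^2*ν^2*(ξ₁^2+ξ₂^2+ξ₃^2)^3) : ℝ) : ℂ), ((ξ₁ : ℝ) : ℂ), ((ξ₂*ξ₃ : ℝ) : ℂ), ((ξ₂*ξ₃ : ℝ) : ℂ);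
     ((ε^2*ν^2*(ξ₁^2+ξ₂^2+ξ₃^2)^3*ξ₃ : ℝ) : ℂ), 0, ((-(ξ₁^2+ξ₂^2) : ℝ) : ℂ), ((-(ξ₁^2+ξ₂^2) : ℝ) : ℂ);
     ((ε*ν*(ξ₁^2+ξ₂^2+ξ₃^2)^2*ξ₃ : ℝ) : ℂ), 0, Complex.I * z, -(Complex.I * z)]

/-- Diagonal matrix of eigenvalues of `𝔹(ξ,ε)` (with `z` standing for `|ξ_h| |ξ|`). -/
noncomputable def Dmat (ν ε ξ₁ ξ₂ ξ₃ : ℝ) (z : ℂ) : Matrix (Fin 4) (Fin 4) ℂ :=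
  !![0, 0, 0, 0;
     0, ((-(ν*(ξ₁^2+ξ₂^2+ξ₃^2)) : ℝ) : ℂ), 0, 0;
     0, 0, ((-(ν*(ξ₁^2+ξ₂^2+ξ₃^2)) : ℝ) : ℂ) + Complex.I * z / ((ε*(ξ₁^2+ξ₂^2+ξ₃^2) : ℝ) : ℂ), 0;
     0, 0, 0, ((-(ν*(ξ₁^2+ξ₂^2+ξ₃^2)) : ℝ) : ℂ) - Complex.I * z / ((ε*(ξ₁^2+ξ₂^2+ξ₃^2) : ℝ) : ℂ)]

set_option maxHeartbeats 1000000 in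
theorem hmul_aux (ν ε ξ₁ ξ₂ ξ₃ : ℝ) (z : ℂ) (hεc : (ε:ℂ) ≠ 0)
    (hsc' : (ξ₁:ℂ) ^ 2 + (ξ₂:ℂ) ^ 2 + (ξ₃:ℂ) ^ 2 ≠ 0)
    (hz2 : z ^ 2 = ((ξ₁:ℂ)^2+(ξ₂:ℂ)^2) * ((ξ₁:ℂ)^2+(ξ₂:ℂ)^2+(ξ₃:ℂ)^2)) :
    (Bmat ν ν ε ξ₁ ξ₂ ξ₃).map (algebraMap ℝ ℂ) * Pmat ν ε ξ₁ ξ₂ ξ₃ z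
      = Pmat ν ε ξ₁ ξ₂ ξ₃ z * Dmat ν ε ξ₁ ξ₂ ξ₃ z := by
  ext i j
  fin_cases i <;> fin_cases j <;>
    (simp [Bmat, Pmat, Dmat, Matrix.mul_apply, Fin.sum_univ_four, vecHead_const, vecTail_const]
     try push_cast
     try field_simp) <;>
    try ring
  all_goals linear_combination (-(1:ℂ)) * Complex.I^2 * hz2
    - (1:ℂ) * (((ξ₁:ℂ)^2+(ξ₂:ℂ)^2) * ((ξ₁:ℂ)^2+(ξ₂:ℂ)^2+(ξ₃:ℂ)^2)) * Complex.I_sq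

set_option maxHeartbeats 2000000 in
theorem detP_aux (ν ε ξ₁ ξ₂ ξ₃ : ℝ) (z : ℂ) :
    (Pmat ν ε ξ₁ ξ₂ ξ₃ z).det
      = 2 * Complex.I * z * (((ξ₁^2+ξ₂^2) * (ξ₁^2+ξ₂^2+ξ₃^2)
          * ((ξ₁^2+ξ₂^2) + ε^2*ν^2*(ξ₁^2+ξ₂^2+ξ₃^2)^3) : ℝ) : ℂ) := by
  rw [det_fin_four']
  simp [Pmat, vecHead_const, vecTail_const]
  push_cast
  ring

set_option maxHeartbeats 4000000 in
/-- Eigenvalues of `𝔹(ξ,ε)` in the case `ν' = ν`: the matrix is diagonalizable over `ℂ`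
with eigenvalues `0`, `−ν|ξ|²`, `−ν|ξ|² ± i|ξ_h|/(ε|ξ|)`. -/
theorem statement8 (ν ε ξ₁ ξ₂ ξ₃ : ℝ) (hν : 0 < ν) (hε : 0 < ε) (hξh : ξ₁ ≠ 0 ∨ ξ₂ ≠ 0) :
    let Bc : Matrix (Fin 4) (Fin 4) ℂ := (Bmat ν ν ε ξ₁ ξ₂ ξ₃).map (algebraMap ℝ ℂ)
    let nξ : ℝ := Real.sqrt (ξ₁ ^ 2 + ξ₂ ^ 2 + ξ₃ ^ 2)
    let nh : ℝ := Real.sqrt (ξ₁ ^ 2 + ξ₂ ^ 2)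
    (∃ P Dg : Matrix (Fin 4) (Fin 4) ℂ, IsUnit P ∧ Dg.IsDiag ∧ Bc = P * Dg * P⁻¹) ∧
    ∀ μ : ℂ, (μ • (1 : Matrix (Fin 4) (Fin 4) ℂ) - Bc).det
        = μ * (μ + ((ν * nξ ^ 2 : ℝ) : ℂ))
          * (μ - (-((ν * nξ ^ 2 : ℝ) : ℂ) + Complex.I * ((nh / (ε * nξ) : ℝ) : ℂ)))
          * (μ - (-((ν * nξ ^ 2 : ℝ) : ℂ) - Complex.I * ((nh / (ε * nξ) : ℝ) : ℂ))) := by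
  intro Bc nξ nh
  have ht : (0:ℝ) < ξ₁ ^ 2 + ξ₂ ^ 2 := by rcases hξh with h | h <;> positivity
  have hs : (0:ℝ) < ξ₁ ^ 2 + ξ₂ ^ 2 + ξ₃ ^ 2 := by positivity
  have hnξ : nξ ^ 2 = ξ₁ ^ 2 + ξ₂ ^ 2 + ξ₃ ^ 2 := Real.sq_sqrt hs.le
  have hnh : nh ^ 2 = ξ₁ ^ 2 + ξ₂ ^ 2 := Real.sq_sqrt ht.le
  have hnξ0 : (0:ℝ) < nξ := Real.sqrt_pos.2 hs
  have hnh0 : (0:ℝ) < nh := Real.sqrt_pos.2 ht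
  have hεc : (ε:ℂ) ≠ 0 := Complex.ofReal_ne_zero.2 hε.ne'
  have hsc : ((ξ₁ ^ 2 + ξ₂ ^ 2 + ξ₃ ^ 2 : ℝ) : ℂ) ≠ 0 := Complex.ofReal_ne_zero.2 hs.ne'
  have hsc' : (ξ₁:ℂ) ^ 2 + (ξ₂:ℂ) ^ 2 + (ξ₃:ℂ) ^ 2 ≠ 0 := by push_cast at hsc; exact hsc
  constructor
  · -- diagonalizability
    set z : ℂ := ((nh * nξ : ℝ) : ℂ) with hzdef
    have hz2 : z ^ 2 = ((ξ₁:ℂ)^2+(ξ₂:ℂ)^2) * ((ξ₁:ℂ)^2+(ξ₂:ℂ)^2+(ξ₃:ℂ)^2) := by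
      rw [hzdef, ← Complex.ofReal_pow, mul_pow, hnh, hnξ]
      push_cast; ring
    have hz0 : z ≠ 0 := by
      rw [hzdef]
      exact Complex.ofReal_ne_zero.2 (by positivity)
    refine ⟨Pmat ν ε ξ₁ ξ₂ ξ₃ z, Dmat ν ε ξ₁ ξ₂ ξ₃ z, ?_, ?_, ?_⟩
    · rw [Matrix.isUnit_iff_isUnit_det, isUnit_iff_ne_zero, detP_aux]
      have hpos : (0:ℝ) < (ξ₁^2+ξ₂^2) * (ξ₁^2+ξ₂^2+ξ₃^2)
          * ((ξ₁^2+ξ₂^2) + ε^2*ν^2*(ξ₁^2+ξ₂^2+ξ₃^2)^3) := by positivity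
      exact mul_ne_zero (mul_ne_zero (mul_ne_zero two_ne_zero Complex.I_ne_zero) hz0)
        (Complex.ofReal_ne_zero.2 hpos.ne')
    · intro i j hij
      fin_cases i <;> fin_cases j <;> simp [Dmat, vecHead_const, vecTail_const] at hij ⊢
    · have hPdet : IsUnit (Pmat ν ε ξ₁ ξ₂ ξ₃ z).det := by
        rw [isUnit_iff_ne_zero, detP_aux]
        have hpos : (0:ℝ) < (ξ₁^2+ξ₂^2) * (ξ₁^2+ξ₂^2+ξ₃^2)
            * ((ξ₁^2+ξ₂^2) + ε^2*ν^2*(ξ₁^2+ξ₂^2+ξ₃^2)^3) := by positivity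
        exact mul_ne_zero (mul_ne_zero (mul_ne_zero two_ne_zero Complex.I_ne_zero) hz0)
          (Complex.ofReal_ne_zero.2 hpos.ne')
      have hmul := hmul_aux ν ε ξ₁ ξ₂ ξ₃ z hεc hsc' hz2
      calc Bc = Bc * (Pmat ν ε ξ₁ ξ₂ ξ₃ z * (Pmat ν ε ξ₁ ξ₂ ξ₃ z)⁻¹) := by
                rw [Matrix.mul_nonsing_inv _ hPdet, mul_one]
        _ = (Bc * Pmat ν ε ξ₁ ξ₂ ξ₃ z) * (Pmat ν ε ξ₁ ξ₂ ξ₃ z)⁻¹ := by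
                rw [Matrix.mul_assoc]
        _ = Pmat ν ε ξ₁ ξ₂ ξ₃ z * Dmat ν ε ξ₁ ξ₂ ξ₃ z * (Pmat ν ε ξ₁ ξ₂ ξ₃ z)⁻¹ := by
                rw [hmul]
  · -- characteristic polynomial
    intro μ
    have hq2 : ((nh / (ε * nξ) : ℝ) : ℂ) ^ 2
        = ((ξ₁ ^ 2 + ξ₂ ^ 2 : ℝ) : ℂ) / (((ε:ℂ)) ^ 2 * ((ξ₁ ^ 2 + ξ₂ ^ 2 + ξ₃ ^ 2 : ℝ) : ℂ)) := by
      have h1 : ((nh:ℝ):ℂ) ^ 2 = ((ξ₁ ^ 2 + ξ₂ ^ 2 : ℝ) : ℂ) := by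
        rw [← Complex.ofReal_pow, hnh]
      have h2 : ((nξ:ℝ):ℂ) ^ 2 = ((ξ₁ ^ 2 + ξ₂ ^ 2 + ξ₃ ^ 2 : ℝ) : ℂ) := by
        rw [← Complex.ofReal_pow, hnξ]
      push_cast
      rw [div_pow, mul_pow, h1, h2]
      push_cast
      ring
    have hRHS : μ * (μ + ((ν * nξ ^ 2 : ℝ) : ℂ))
            * (μ - (-((ν * nξ ^ 2 : ℝ) : ℂ) + Complex.I * ((nh / (ε * nξ) : ℝ) : ℂ)))
            * (μ - (-((ν * nξ ^ 2 : ℝ) : ℂ) - Complex.I * ((nh / (ε * nξ) : ℝ) : ℂ)))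
        = μ * (μ + ((ν * nξ ^ 2 : ℝ) : ℂ)) * ((μ + ((ν * nξ ^ 2 : ℝ) : ℂ)) ^ 2
            + ((ξ₁ ^ 2 + ξ₂ ^ 2 : ℝ) : ℂ) / (((ε:ℂ)) ^ 2 * ((ξ₁ ^ 2 + ξ₂ ^ 2 + ξ₃ ^ 2 : ℝ) : ℂ))) := by
      linear_combination (-(μ * (μ + ((ν * nξ ^ 2 : ℝ) : ℂ)) * Complex.I ^ 2)) * hq2
        - μ * (μ + ((ν * nξ ^ 2 : ℝ) : ℂ))
          * (((ξ₁ ^ 2 + ξ₂ ^ 2 : ℝ) : ℂ) / (((ε:ℂ)) ^ 2 * ((ξ₁ ^ 2 + ξ₂ ^ 2 + ξ₃ ^ 2 : ℝ) : ℂ)))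
          * Complex.I_sq
    rw [hRHS, show nξ ^ 2 = ξ₁ ^ 2 + ξ₂ ^ 2 + ξ₃ ^ 2 from hnξ]
    have hM : μ • (1 : Matrix (Fin 4) (Fin 4) ℂ) - Bc
        = !![μ + (ν:ℂ) * ((ξ₂:ℂ) ^ 2 + (ξ₃:ℂ) ^ 2), -((ν:ℂ) * ξ₁ * ξ₂), -((ν:ℂ) * ξ₁ * ξ₃),
              -((ξ₁:ℂ) * ξ₃ / ((ε:ℂ) * ((ξ₁:ℂ) ^ 2 + (ξ₂:ℂ) ^ 2 + (ξ₃:ℂ) ^ 2)));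
             -((ν:ℂ) * ξ₁ * ξ₂), μ + (ν:ℂ) * ((ξ₁:ℂ) ^ 2 + (ξ₃:ℂ) ^ 2), -((ν:ℂ) * ξ₂ * ξ₃),
              -((ξ₂:ℂ) * ξ₃ / ((ε:ℂ) * ((ξ₁:ℂ) ^ 2 + (ξ₂:ℂ) ^ 2 + (ξ₃:ℂ) ^ 2)));
             -((ν:ℂ) * ξ₁ * ξ₃), -((ν:ℂ) * ξ₂ * ξ₃), μ + (ν:ℂ) * ((ξ₁:ℂ) ^ 2 + (ξ₂:ℂ) ^ 2),
              ((ξ₁:ℂ) ^ 2 + (ξ₂:ℂ) ^ 2) / ((ε:ℂ) * ((ξ₁:ℂ) ^ 2 + (ξ₂:ℂ) ^ 2 + (ξ₃:ℂ) ^ 2));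
             0, 0, -(1 / (ε:ℂ)), μ + (ν:ℂ) * ((ξ₁:ℂ) ^ 2 + (ξ₂:ℂ) ^ 2 + (ξ₃:ℂ) ^ 2)] := by
      ext i j
      fin_cases i <;> fin_cases j <;>
        simp [Bc, Bmat, Matrix.one_apply] <;> push_cast <;> ring
    rw [hM, det_fin_four']
    simp only [Matrix.cons_val', Matrix.cons_val_zero, Matrix.cons_val_one, Matrix.head_cons,
      Matrix.empty_val', Matrix.cons_val_fin_one, Matrix.head_fin_const, Matrix.cons_val_two,
      Matrix.cons_val_three, Matrix.tail_cons, Matrix.of_apply]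
    push_cast
    field_simp
    ring
end

section
/- There exists a constant C > 0 such that for every u ∈ 𝒮(ℝ³) and every g ∈ 𝒮(ℝ): ∫_{ℝ²} ∫_ℝ |u(x_h, x₃)|² |g(x₃)| dx₃ dx_h ≤ C ‖g‖_{L²(ℝ)} ‖u‖_{L²(ℝ³)}^{3/2} ‖∂₃ u‖_{L²(ℝ³)}^{1/2}. -/
open MeasureTheory SchwartzMap Filter

/-- The vertical derivative `∂₃ u`. -/
noncomputable def vertDeriv (u : EuclideanSpace ℝ (Fin 3) → ℂ)
    (x : EuclideanSpace ℝ (Fin 3)) : ℂ :=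
  fderiv ℝ u x (EuclideanSpace.single 2 1)

noncomputable def e3 (a b t : ℝ) : EuclideanSpace ℝ (Fin 3) := WithLp.toLp 2 ![a, b, t]

lemma e3_line (a b t : ℝ) :
    e3 a b t = e3 a b 0 + t • EuclideanSpace.single (2 : Fin 3) (1:ℝ) := by
  ext i
  simp only [PiLp.add_apply, PiLp.smul_apply, EuclideanSpace.single_apply, smul_eq_mul]
  fin_cases i <;> simp [e3]

lemma e3_cont (a b : ℝ) : Continuous (fun t => e3 a b t) := by
  have : (fun t => e3 a b t)
      = fun t => e3 a b 0 + t • EuclideanSpace.single (2 : Fin 3) (1:ℝ) := by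
    funext t; exact e3_line a b t
  rw [this]
  exact continuous_const.add (continuous_id.smul continuous_const)

lemma hasDerivAt_line (u : 𝓢(EuclideanSpace ℝ (Fin 3), ℂ)) (a b t : ℝ) :
    HasDerivAt (fun s => u (e3 a b s))
      (LineDeriv.lineDerivOp (EuclideanSpace.single (2 : Fin 3) (1:ℝ)) u (e3 a b t)) t := by
  set v := EuclideanSpace.single (2 : Fin 3) (1:ℝ)
  have hL : HasDerivAt (fun s : ℝ => e3 a b 0 + s • v) v t := by
    simpa using ((hasDerivAt_id t).smul_const v).const_add (e3 a b 0)
  have hu : HasFDerivAt (⇑u) (fderiv ℝ (⇑u) (e3 a b t)) (e3 a b t) :=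
    (u.differentiable (e3 a b t)).hasFDerivAt
  rw [e3_line a b t] at hu
  have hcomp := hu.comp_hasDerivAt t hL
  have heq : (fun s => u (e3 a b s)) = fun s => u (e3 a b 0 + s • v) := by
    funext s; rw [e3_line a b s]
  rw [heq, SchwartzMap.lineDerivOp_apply_eq_fderiv, e3_line a b t]
  exact hcomp
lemma abs_le_normE (a b t : ℝ) : |t| ≤ ‖e3 a b t‖ := by
  rw [EuclideanSpace.norm_eq, ← Real.sqrt_sq_eq_abs]
  apply Real.sqrt_le_sqrt
  rw [Fin.sum_univ_three]
  have h0 : e3 a b t 0 = a := rfl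
  have h1 : e3 a b t 1 = b := rfl
  have h2 : e3 a b t 2 = t := rfl
  rw [h0, h1, h2]
  have : ‖t‖ ^ 2 = t ^ 2 := by rw [Real.norm_eq_abs, sq_abs]
  nlinarith [sq_nonneg ‖a‖, sq_nonneg ‖b‖]

lemma schwartz_decay (w : 𝓢(EuclideanSpace ℝ (Fin 3), ℂ)) (k : ℕ) :
    ∃ C : ℝ, 0 ≤ C ∧ ∀ a b t : ℝ, ‖w (e3 a b t)‖ ≤ C * ((1 + |t|) ^ k)⁻¹ := by
  obtain ⟨C, hC⟩ : ∃ C, ∀ x, (1 + ‖x‖) ^ k * ‖w x‖ ≤ C := by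
    refine ⟨2 ^ k * ((Finset.Iic (k, 0)).sup (schwartzSeminormFamily ℝ _ _)) w, fun x => ?_⟩
    have h := SchwartzMap.one_add_le_sup_seminorm_apply (𝕜 := ℝ) (m := (k, 0)) le_rfl le_rfl w x
    simp at h
    exact h
  have hC0 : 0 ≤ C := le_trans (by positivity) (hC 0)
  refine ⟨C, hC0, fun a b t => ?_⟩
  have h1 : (0:ℝ) < (1 + |t|) ^ k := by positivity
  rw [← div_eq_mul_inv, le_div_iff₀ h1]
  calc ‖w (e3 a b t)‖ * (1 + |t|) ^ k
      ≤ ‖w (e3 a b t)‖ * (1 + ‖e3 a b t‖) ^ k := by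
        apply mul_le_mul_of_nonneg_left _ (norm_nonneg _)
        exact pow_le_pow_left₀ (by positivity) (by linarith [abs_le_normE a b t]) k
    _ = (1 + ‖e3 a b t‖) ^ k * ‖w (e3 a b t)‖ := mul_comm _ _
    _ ≤ C := hC _
lemma schwartz_decay1 (g : 𝓢(ℝ, ℂ)) :
    ∃ C : ℝ, 0 ≤ C ∧ ∀ t : ℝ, ‖g t‖ ≤ C * ((1 + |t|) ^ 2)⁻¹ := by
  obtain ⟨C, hC⟩ : ∃ C, ∀ x : ℝ, (1 + ‖x‖) ^ 2 * ‖g x‖ ≤ C := by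
    refine ⟨2 ^ 2 * ((Finset.Iic (2, 0)).sup (schwartzSeminormFamily ℝ _ _)) g, fun x => ?_⟩
    have h := SchwartzMap.one_add_le_sup_seminorm_apply (𝕜 := ℝ) (m := (2, 0)) le_rfl le_rfl g x
    simp at h
    exact h
  have hC0 : 0 ≤ C := le_trans (by positivity) (hC 0)
  refine ⟨C, hC0, fun t => ?_⟩
  have h1 : (0:ℝ) < (1 + |t|) ^ 2 := by positivity
  rw [← div_eq_mul_inv, le_div_iff₀ h1]
  calc ‖g t‖ * (1 + |t|) ^ 2 = (1 + ‖t‖) ^ 2 * ‖g t‖ := by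
        rw [Real.norm_eq_abs]; ring
    _ ≤ C := hC t

lemma integrable_base : Integrable (fun t : ℝ => ((1 + |t|) ^ 2)⁻¹) := by
  have h := integrable_one_add_norm (E := ℝ) (μ := volume) (r := 2) (by norm_num)
  apply h.congr
  filter_upwards with x
  rw [Real.norm_eq_abs, show ((1:ℝ) + |x|) ^ (-(2:ℝ)) = ((1 + |x|) ^ (2:ℕ))⁻¹ by
    rw [Real.rpow_neg (by positivity), ← Real.rpow_natCast (1 + |x|) 2]; norm_num]
lemma cs_int {α : Type*} [MeasurableSpace α] {μ : Measure α} {φ ψ : α → ℝ}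
    (hφm : AEStronglyMeasurable φ μ) (hψm : AEStronglyMeasurable ψ μ)
    (hφ0 : ∀ t, 0 ≤ φ t) (hψ0 : ∀ t, 0 ≤ ψ t)
    (hφ2 : Integrable (fun t => φ t ^ 2) μ) (hψ2 : Integrable (fun t => ψ t ^ 2) μ) :
    ∫ t, φ t * ψ t ∂μ ≤ (∫ t, φ t ^ 2 ∂μ) ^ (1/2:ℝ) * (∫ t, ψ t ^ 2 ∂μ) ^ (1/2:ℝ) := by
  have hpq : Real.HolderConjugate 2 2 := Real.HolderConjugate.two_two
  have h2 : ENNReal.ofReal (2:ℝ) = 2 := by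
    rw [ENNReal.ofReal_ofNat]
  have hφp : MemLp φ (ENNReal.ofReal (2:ℝ)) μ := by
    rw [h2]; exact (memLp_two_iff_integrable_sq hφm).mpr hφ2
  have hψp : MemLp ψ (ENNReal.ofReal (2:ℝ)) μ := by
    rw [h2]; exact (memLp_two_iff_integrable_sq hψm).mpr hψ2
  have h := integral_mul_le_Lp_mul_Lq_of_nonneg hpq
    (Eventually.of_forall hφ0) (Eventually.of_forall hψ0) hφp hψp
  have e1 : ∫ t, φ t ^ (2:ℝ) ∂μ = ∫ t, φ t ^ 2 ∂μ := by
    congr 1; funext t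
    rw [show (2:ℝ) = ((2:ℕ):ℝ) by norm_num, Real.rpow_natCast]
  have e2 : ∫ t, ψ t ^ (2:ℝ) ∂μ = ∫ t, ψ t ^ 2 ∂μ := by
    congr 1; funext t
    rw [show (2:ℝ) = ((2:ℕ):ℝ) by norm_num, Real.rpow_natCast]
  rw [e1, e2] at h
  exact h

lemma key (u : 𝓢(EuclideanSpace ℝ (Fin 3), ℂ)) (g : 𝓢(ℝ, ℂ)) (a b : ℝ) :
    ∫ t, ‖u (e3 a b t)‖ ^ 2 * ‖g t‖ ≤
      Real.sqrt 2 * (∫ t, ‖g t‖ ^ 2) ^ (1/2:ℝ) * (∫ t, ‖u (e3 a b t)‖ ^ 2) ^ (3/4:ℝ) *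
        (∫ t, ‖LineDeriv.lineDerivOp (EuclideanSpace.single (2 : Fin 3) (1:ℝ)) u (e3 a b t)‖ ^ 2) ^ (1/4:ℝ) := by
  set v : EuclideanSpace ℝ (Fin 3) := EuclideanSpace.single (2 : Fin 3) (1:ℝ) with hv
  set f : ℝ → ℂ := fun t => u (e3 a b t) with hf
  set d : ℝ → ℂ := fun t => LineDeriv.lineDerivOp v u (e3 a b t) with hd
  obtain ⟨Cu, hCu0, hCu⟩ := schwartz_decay u 2
  obtain ⟨Cd, hCd0, hCd⟩ := schwartz_decay (LineDeriv.lineDerivOp v u) 2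
  obtain ⟨Cg, hCg0, hCg⟩ := schwartz_decay1 g
  have hinv_le_one : ∀ t : ℝ, ((1 + |t|) ^ 2)⁻¹ ≤ 1 := by
    intro t
    rw [inv_le_one₀ (by positivity)]
    nlinarith [abs_nonneg t]
  have hf_le : ∀ t, ‖f t‖ ≤ Cu * ((1 + |t|) ^ 2)⁻¹ := fun t => hCu a b t
  have hd_le : ∀ t, ‖d t‖ ≤ Cd * ((1 + |t|) ^ 2)⁻¹ := fun t => hCd a b t
  have hg_le : ∀ t, ‖g t‖ ≤ Cg * ((1 + |t|) ^ 2)⁻¹ := hCg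
  have hf_le' : ∀ t, ‖f t‖ ≤ Cu := fun t => le_trans (hf_le t)
    (by nlinarith [hinv_le_one t, inv_nonneg.mpr (sq_nonneg (1 + |t|))])
  have hd_le' : ∀ t, ‖d t‖ ≤ Cd := fun t => le_trans (hd_le t)
    (by nlinarith [hinv_le_one t, inv_nonneg.mpr (sq_nonneg (1 + |t|))])
  have hg_le' : ∀ t, ‖g t‖ ≤ Cg := fun t => le_trans (hg_le t)
    (by nlinarith [hinv_le_one t, inv_nonneg.mpr (sq_nonneg (1 + |t|))])
  have hf_cont : Continuous f := u.continuous.comp (e3_cont a b)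
  have hd_cont : Continuous d := (LineDeriv.lineDerivOp v u).continuous.comp (e3_cont a b)
  -- integrability
  have mono_int : ∀ (K : ℝ) (h : ℝ → ℝ), Continuous h → (∀ t, 0 ≤ h t) →
      (∀ t, h t ≤ K * ((1 + |t|) ^ 2)⁻¹) → Integrable h := by
    intro K h hc h0 hle
    refine Integrable.mono' (integrable_base.const_mul K) hc.aestronglyMeasurable ?_
    filter_upwards with t
    rw [Real.norm_eq_abs, abs_of_nonneg (h0 t)]
    exact hle t
  have base_pt : ∀ t : ℝ, (0:ℝ) ≤ ((1 + |t|) ^ 2)⁻¹ := fun t => by positivity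
  have hIf2 : Integrable (fun t => ‖f t‖ ^ 2) := by
    refine mono_int (Cu * Cu) _ (hf_cont.norm.pow 2) (fun t => by positivity) (fun t => ?_)
    calc ‖f t‖ ^ 2 = ‖f t‖ * ‖f t‖ := sq (‖f t‖) ▸ rfl
      _ ≤ Cu * (Cu * ((1 + |t|) ^ 2)⁻¹) :=
          mul_le_mul (hf_le' t) (hf_le t) (norm_nonneg _) hCu0
      _ = Cu * Cu * ((1 + |t|) ^ 2)⁻¹ := by ring
  have hId2 : Integrable (fun t => ‖d t‖ ^ 2) := by
    refine mono_int (Cd * Cd) _ (hd_cont.norm.pow 2) (fun t => by positivity) (fun t => ?_)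
    calc ‖d t‖ ^ 2 = ‖d t‖ * ‖d t‖ := sq (‖d t‖) ▸ rfl
      _ ≤ Cd * (Cd * ((1 + |t|) ^ 2)⁻¹) :=
          mul_le_mul (hd_le' t) (hd_le t) (norm_nonneg _) hCd0
      _ = Cd * Cd * ((1 + |t|) ^ 2)⁻¹ := by ring
  have hIg2 : Integrable (fun t => ‖g t‖ ^ 2) := by
    refine mono_int (Cg * Cg) _ (g.continuous.norm.pow 2) (fun t => by positivity) (fun t => ?_)
    calc ‖g t‖ ^ 2 = ‖g t‖ * ‖g t‖ := sq (‖g t‖) ▸ rfl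
      _ ≤ Cg * (Cg * ((1 + |t|) ^ 2)⁻¹) :=
          mul_le_mul (hg_le' t) (hg_le t) (norm_nonneg _) hCg0
      _ = Cg * Cg * ((1 + |t|) ^ 2)⁻¹ := by ring
  have hIfd : Integrable (fun t => ‖f t‖ * ‖d t‖) := by
    refine mono_int (Cu * Cd) _ (hf_cont.norm.mul hd_cont.norm)
      (fun t => by positivity) (fun t => ?_)
    calc ‖f t‖ * ‖d t‖ ≤ Cu * (Cd * ((1 + |t|) ^ 2)⁻¹) :=
          mul_le_mul (hf_le' t) (hd_le t) (norm_nonneg _) hCu0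
      _ = Cu * Cd * ((1 + |t|) ^ 2)⁻¹ := by ring
  have hIfg : Integrable (fun t => ‖f t‖ * ‖g t‖) := by
    refine mono_int (Cu * Cg) _ (hf_cont.norm.mul g.continuous.norm)
      (fun t => by positivity) (fun t => ?_)
    calc ‖f t‖ * ‖g t‖ ≤ Cu * (Cg * ((1 + |t|) ^ 2)⁻¹) :=
          mul_le_mul (hf_le' t) (hg_le t) (norm_nonneg _) hCu0
      _ = Cu * Cg * ((1 + |t|) ^ 2)⁻¹ := by ring
  have hIf2g : Integrable (fun t => ‖f t‖ ^ 2 * ‖g t‖) := by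
    refine mono_int (Cu * Cu * Cg) _ ((hf_cont.norm.pow 2).mul g.continuous.norm)
      (fun t => by positivity) (fun t => ?_)
    have h1 : ‖f t‖ ^ 2 ≤ Cu * Cu := by
      calc ‖f t‖ ^ 2 = ‖f t‖ * ‖f t‖ := sq (‖f t‖) ▸ rfl
        _ ≤ Cu * Cu := mul_le_mul (hf_le' t) (hf_le' t) (norm_nonneg _) hCu0
    calc ‖f t‖ ^ 2 * ‖g t‖ ≤ (Cu * Cu) * (Cg * ((1 + |t|) ^ 2)⁻¹) :=
          mul_le_mul h1 (hg_le t) (norm_nonneg _) (by positivity)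
      _ = Cu * Cu * Cg * ((1 + |t|) ^ 2)⁻¹ := by ring
  set If := ∫ t, ‖f t‖ ^ 2 with hIfdef
  set Id := ∫ t, ‖d t‖ ^ 2 with hIddef
  set Ig := ∫ t, ‖g t‖ ^ 2 with hIgdef
  have hIf0 : 0 ≤ If := integral_nonneg fun t => by positivity
  have hId0 : 0 ≤ Id := integral_nonneg fun t => by positivity
  have hCS_fd : ∫ t, ‖f t‖ * ‖d t‖ ≤ If ^ (1/2:ℝ) * Id ^ (1/2:ℝ) :=
    cs_int hf_cont.norm.aestronglyMeasurable hd_cont.norm.aestronglyMeasurable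
      (fun t => norm_nonneg _) (fun t => norm_nonneg _) hIf2 hId2
  have hCS_fg : ∫ t, ‖f t‖ * ‖g t‖ ≤ If ^ (1/2:ℝ) * Ig ^ (1/2:ℝ) :=
    cs_int hf_cont.norm.aestronglyMeasurable g.continuous.norm.aestronglyMeasurable
      (fun t => norm_nonneg _) (fun t => norm_nonneg _) hIf2 hIg2
  have hf' : ∀ t, HasDerivAt f (d t) t := fun t => hasDerivAt_line u a b t
  have hF' : ∀ r : ℝ, HasDerivAt (fun s => ‖f s‖ ^ 2) (2 * (inner ℝ (f r) (d r) : ℝ)) r :=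
    fun r => (hf' r).norm_sq
  have hF'cont : Continuous fun r => 2 * (inner ℝ (f r) (d r) : ℝ) :=
    continuous_const.mul (hf_cont.inner hd_cont)
  set M := ∫ t, 2 * (‖f t‖ * ‖d t‖) with hMdef
  have hM_int : Integrable (fun t => 2 * (‖f t‖ * ‖d t‖)) := hIfd.const_mul 2
  have hfsq_le : ∀ t : ℝ, ‖f t‖ ^ 2 ≤ Cu * Cu * ((1 + |t|) ^ 2)⁻¹ := by
    intro t
    calc ‖f t‖ ^ 2 = ‖f t‖ * ‖f t‖ := sq (‖f t‖) ▸ rfl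
      _ ≤ Cu * (Cu * ((1 + |t|) ^ 2)⁻¹) :=
          mul_le_mul (hf_le' t) (hf_le t) (norm_nonneg _) hCu0
      _ = Cu * Cu * ((1 + |t|) ^ 2)⁻¹ := by ring
  have key_sup : ∀ t, ‖f t‖ ^ 2 ≤ M := by
    intro t
    have step : ∀ s, s ≤ t → ‖f t‖ ^ 2 ≤ ‖f s‖ ^ 2 + M := by
      intro s hst
      have hftc : ∫ r in s..t, 2 * (inner ℝ (f r) (d r) : ℝ) = ‖f t‖ ^ 2 - ‖f s‖ ^ 2 :=
        intervalIntegral.integral_eq_sub_of_hasDerivAt (fun r _ => hF' r)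
          (hF'cont.intervalIntegrable s t)
      have hb1 : (∫ r in s..t, 2 * (inner ℝ (f r) (d r) : ℝ))
          ≤ ∫ r in s..t, 2 * (‖f r‖ * ‖d r‖) := by
        apply intervalIntegral.integral_mono_on hst (hF'cont.intervalIntegrable s t)
          hM_int.intervalIntegrable
        intro r _
        have h1 := abs_real_inner_le_norm (f r) (d r)
        have h2 := le_abs_self (inner ℝ (f r) (d r) : ℝ)
        nlinarith
      have hb2 : (∫ r in s..t, 2 * (‖f r‖ * ‖d r‖)) ≤ M := by
        rw [intervalIntegral.integral_of_le hst]
        exact setIntegral_le_integral hM_int (Eventually.of_forall fun r => by positivity)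
      linarith
    have htend0 : Tendsto (fun s : ℝ => ‖f s‖ ^ 2) atBot (nhds 0) := by
      have h1 : Tendsto (fun s : ℝ => (1 + |s|) ^ 2) atBot atTop :=
        (tendsto_pow_atTop two_ne_zero).comp
          (tendsto_atTop_add_const_left _ 1 tendsto_abs_atBot_atTop)
      have h2 : Tendsto (fun s : ℝ => ((1 + |s|) ^ 2)⁻¹) atBot (nhds 0) :=
        tendsto_inv_atTop_zero.comp h1
      have h3 : Tendsto (fun s : ℝ => Cu * Cu * ((1 + |s|) ^ 2)⁻¹) atBot (nhds 0) := by
        simpa using h2.const_mul (Cu * Cu)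
      exact squeeze_zero (fun s => by positivity) (fun s => hfsq_le s) h3
    have htend : Tendsto (fun s : ℝ => ‖f s‖ ^ 2 + M) atBot (nhds (0 + M)) :=
      htend0.add_const M
    have := ge_of_tendsto htend (eventually_atBot.mpr ⟨t, fun s hs => step s hs⟩)
    linarith
  have hM_le : M ≤ 2 * (If ^ (1/2:ℝ) * Id ^ (1/2:ℝ)) := by
    rw [hMdef, integral_const_mul]
    have := hCS_fd
    nlinarith [hCS_fd]
  set K := 2 * (If ^ (1/2:ℝ) * Id ^ (1/2:ℝ)) with hKdef
  have hK0 : 0 ≤ K := by positivity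
  have hsup : ∀ t, ‖f t‖ ≤ Real.sqrt K := by
    intro t
    have h1 : ‖f t‖ ^ 2 ≤ K := le_trans (key_sup t) hM_le
    calc ‖f t‖ = Real.sqrt (‖f t‖ ^ 2) := by rw [Real.sqrt_sq (norm_nonneg _)]
      _ ≤ Real.sqrt K := Real.sqrt_le_sqrt h1
  have hmain : ∫ t, ‖f t‖ ^ 2 * ‖g t‖ ≤ Real.sqrt K * (If ^ (1/2:ℝ) * Ig ^ (1/2:ℝ)) := by
    calc ∫ t, ‖f t‖ ^ 2 * ‖g t‖ ≤ ∫ t, Real.sqrt K * (‖f t‖ * ‖g t‖) := by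
          apply integral_mono hIf2g (hIfg.const_mul _)
          intro t
          show ‖f t‖ ^ 2 * ‖g t‖ ≤ Real.sqrt K * (‖f t‖ * ‖g t‖)
          have heq : ‖f t‖ ^ 2 * ‖g t‖ = ‖f t‖ * (‖f t‖ * ‖g t‖) := by ring
          rw [heq]
          exact mul_le_mul_of_nonneg_right (hsup t)
            (mul_nonneg (norm_nonneg _) (norm_nonneg _))
      _ = Real.sqrt K * ∫ t, ‖f t‖ * ‖g t‖ := integral_const_mul _ _
      _ ≤ Real.sqrt K * (If ^ (1/2:ℝ) * Ig ^ (1/2:ℝ)) :=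
          mul_le_mul_of_nonneg_left hCS_fg (Real.sqrt_nonneg _)
  have hsqrtK : Real.sqrt K = Real.sqrt 2 * If ^ (1/4:ℝ) * Id ^ (1/4:ℝ) := by
    rw [hKdef, Real.sqrt_mul (by norm_num : (0:ℝ) ≤ 2),
      Real.sqrt_mul (Real.rpow_nonneg hIf0 _), Real.sqrt_eq_rpow (If ^ (1/2:ℝ)),
      Real.sqrt_eq_rpow (Id ^ (1/2:ℝ)), ← Real.rpow_mul hIf0, ← Real.rpow_mul hId0]
    norm_num
    ring
  calc ∫ t, ‖f t‖ ^ 2 * ‖g t‖ ≤ Real.sqrt K * (If ^ (1/2:ℝ) * Ig ^ (1/2:ℝ)) := hmain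
    _ = Real.sqrt 2 * Ig ^ (1/2:ℝ) * (If ^ (1/4:ℝ) * If ^ (1/2:ℝ)) * Id ^ (1/4:ℝ) := by
        rw [hsqrtK]; ring
    _ = Real.sqrt 2 * Ig ^ (1/2:ℝ) * If ^ (3/4:ℝ) * Id ^ (1/4:ℝ) := by
        rw [← Real.rpow_add' hIf0 (by norm_num)]
        norm_num


lemma cont_rpow_const (c : ℝ) (hc : 0 < c) : Continuous (fun y : ℝ => y ^ c) :=
  continuous_id.rpow continuous_const (fun _ => Or.inr hc)

lemma rpow_mul_rpow_le_add {x y : ℝ} (hx : 0 ≤ x) (hy : 0 ≤ y) {p q : ℝ}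
    (hp : 0 ≤ p) (hq : 0 ≤ q) (hpq : p + q = 1) : x ^ p * y ^ q ≤ x + y := by
  have hxy : 0 ≤ x + y := by linarith
  calc x ^ p * y ^ q ≤ (x + y) ^ p * (x + y) ^ q :=
        mul_le_mul (Real.rpow_le_rpow hx (by linarith) hp)
          (Real.rpow_le_rpow hy (by linarith) hq) (Real.rpow_nonneg hy _)
          (Real.rpow_nonneg hxy _)
    _ = (x + y) ^ (p + q) := (Real.rpow_add' hxy (by rw [hpq]; norm_num)).symm
    _ = x + y := by rw [hpq, Real.rpow_one]

lemma holder_34 {α : Type*} [MeasurableSpace α] {μ : Measure α} {A B : α → ℝ}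
    (hA : Integrable A μ) (hB : Integrable B μ)
    (hA0 : ∀ x, 0 ≤ A x) (hB0 : ∀ x, 0 ≤ B x) :
    ∫ x, (A x) ^ (3/4:ℝ) * (B x) ^ (1/4:ℝ) ∂μ
      ≤ (∫ x, A x ∂μ) ^ (3/4:ℝ) * (∫ x, B x ∂μ) ^ (1/4:ℝ) := by
  have hIA0 : 0 ≤ ∫ x, A x ∂μ := integral_nonneg hA0
  have hIB0 : 0 ≤ ∫ x, B x ∂μ := integral_nonneg hB0
  have hAm : AEStronglyMeasurable A μ := hA.aestronglyMeasurable
  have hBm : AEStronglyMeasurable B μ := hB.aestronglyMeasurable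
  have mAh : ∀ c : ℝ, 0 < c → AEStronglyMeasurable (fun x => (A x) ^ c) μ := fun c hc =>
    (cont_rpow_const c hc).comp_aestronglyMeasurable hAm
  have mBh : ∀ c : ℝ, 0 < c → AEStronglyMeasurable (fun x => (B x) ^ c) μ := fun c hc =>
    (cont_rpow_const c hc).comp_aestronglyMeasurable hBm
  have sq_half : ∀ z : ℝ, 0 ≤ z → (z ^ (1/2:ℝ)) ^ 2 = z := by
    intro z hz
    rw [← Real.rpow_natCast (z ^ (1/2:ℝ)) 2, ← Real.rpow_mul hz]
    norm_num
  have sq_quarter : ∀ z : ℝ, 0 ≤ z → (z ^ (1/4:ℝ)) ^ 2 = z ^ (1/2:ℝ) := by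
    intro z hz
    rw [← Real.rpow_natCast (z ^ (1/4:ℝ)) 2, ← Real.rpow_mul hz]
    norm_num
  -- integrability of A^{1/2} B^{1/2}
  have hABhalf_int : Integrable (fun x => (A x) ^ (1/2:ℝ) * (B x) ^ (1/2:ℝ)) μ := by
    refine Integrable.mono' (hA.add hB)
      ((mAh _ (by norm_num)).mul (mBh _ (by norm_num))) ?_
    filter_upwards with x
    rw [Real.norm_eq_abs, abs_of_nonneg (mul_nonneg (Real.rpow_nonneg (hA0 x) _)
      (Real.rpow_nonneg (hB0 x) _))]
    exact rpow_mul_rpow_le_add (hA0 x) (hB0 x) (by norm_num) (by norm_num) (by norm_num)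
  -- second CS : ∫ A^{1/2} B^{1/2} ≤ (∫A)^{1/2} (∫B)^{1/2}
  have eA2 : (fun x => ((A x) ^ (1/2:ℝ)) ^ 2) = A := funext fun x => sq_half (A x) (hA0 x)
  have eB2 : (fun x => ((B x) ^ (1/2:ℝ)) ^ 2) = B := funext fun x => sq_half (B x) (hB0 x)
  have cs2 : ∫ x, (A x) ^ (1/2:ℝ) * (B x) ^ (1/2:ℝ) ∂μ
      ≤ (∫ x, A x ∂μ) ^ (1/2:ℝ) * (∫ x, B x ∂μ) ^ (1/2:ℝ) := by
    have h := cs_int (φ := fun x => (A x) ^ (1/2:ℝ)) (ψ := fun x => (B x) ^ (1/2:ℝ))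
      (mAh _ (by norm_num : (0:ℝ) < 1/2)) (mBh _ (by norm_num : (0:ℝ) < 1/2))
      (fun x => Real.rpow_nonneg (hA0 x) _) (fun x => Real.rpow_nonneg (hB0 x) _)
      (by rw [show (fun t => ((A t) ^ (1/2:ℝ)) ^ 2) = A from eA2]; exact hA)
      (by rw [show (fun t => ((B t) ^ (1/2:ℝ)) ^ 2) = B from eB2]; exact hB)
    rw [show (∫ t, ((A t) ^ (1/2:ℝ)) ^ 2 ∂μ) = ∫ x, A x ∂μ from congrArg _ eA2,
      show (∫ t, ((B t) ^ (1/2:ℝ)) ^ 2 ∂μ) = ∫ x, B x ∂μ from congrArg _ eB2] at h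
    exact h
  -- first CS : ∫ A^{3/4} B^{1/4} = ∫ A^{1/2} * (A^{1/4} B^{1/4})
  have cs1 : ∫ x, (A x) ^ (3/4:ℝ) * (B x) ^ (1/4:ℝ) ∂μ
      ≤ (∫ x, A x ∂μ) ^ (1/2:ℝ)
        * (∫ x, (A x) ^ (1/2:ℝ) * (B x) ^ (1/2:ℝ) ∂μ) ^ (1/2:ℝ) := by
    have hψ2 : Integrable (fun x => ((A x) ^ (1/4:ℝ) * (B x) ^ (1/4:ℝ)) ^ 2) μ := by
      have : (fun x => ((A x) ^ (1/4:ℝ) * (B x) ^ (1/4:ℝ)) ^ 2)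
          = fun x => (A x) ^ (1/2:ℝ) * (B x) ^ (1/2:ℝ) := by
        funext x
        rw [mul_pow, sq_quarter (A x) (hA0 x), sq_quarter (B x) (hB0 x)]
      rw [this]; exact hABhalf_int
    have h := cs_int (φ := fun x => (A x) ^ (1/2:ℝ))
      (ψ := fun x => (A x) ^ (1/4:ℝ) * (B x) ^ (1/4:ℝ))
      (mAh _ (by norm_num : (0:ℝ) < 1/2))
      ((mAh _ (by norm_num : (0:ℝ) < 1/4)).mul (mBh _ (by norm_num : (0:ℝ) < 1/4)))
      (fun x => Real.rpow_nonneg (hA0 x) _)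
      (fun x => mul_nonneg (Real.rpow_nonneg (hA0 x) _) (Real.rpow_nonneg (hB0 x) _))
      (by rw [show (fun t => ((A t) ^ (1/2:ℝ)) ^ 2) = A from eA2]; exact hA) hψ2
    have heq1 : (fun x => (A x) ^ (1/2:ℝ) * ((A x) ^ (1/4:ℝ) * (B x) ^ (1/4:ℝ)))
        = fun x => (A x) ^ (3/4:ℝ) * (B x) ^ (1/4:ℝ) := by
      funext x
      rw [← mul_assoc, ← Real.rpow_add' (hA0 x) (by norm_num)]
      norm_num
    have heq2 : (fun x => ((A x) ^ (1/4:ℝ) * (B x) ^ (1/4:ℝ)) ^ 2)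
        = fun x => (A x) ^ (1/2:ℝ) * (B x) ^ (1/2:ℝ) := by
      funext x
      rw [mul_pow, sq_quarter (A x) (hA0 x), sq_quarter (B x) (hB0 x)]
    rw [← heq1, ← heq2]
    rw [show (∫ t, ((A t) ^ (1/2:ℝ)) ^ 2 ∂μ) = ∫ x, A x ∂μ from congrArg _ eA2] at h
    exact h
  have hIABhalf0 : 0 ≤ ∫ x, (A x) ^ (1/2:ℝ) * (B x) ^ (1/2:ℝ) ∂μ :=
    integral_nonneg fun x => mul_nonneg (Real.rpow_nonneg (hA0 x) _)
      (Real.rpow_nonneg (hB0 x) _)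
  calc ∫ x, (A x) ^ (3/4:ℝ) * (B x) ^ (1/4:ℝ) ∂μ
      ≤ (∫ x, A x ∂μ) ^ (1/2:ℝ)
        * (∫ x, (A x) ^ (1/2:ℝ) * (B x) ^ (1/2:ℝ) ∂μ) ^ (1/2:ℝ) := cs1
    _ ≤ (∫ x, A x ∂μ) ^ (1/2:ℝ)
        * ((∫ x, A x ∂μ) ^ (1/2:ℝ) * (∫ x, B x ∂μ) ^ (1/2:ℝ)) ^ (1/2:ℝ) := by
        apply mul_le_mul_of_nonneg_left _ (Real.rpow_nonneg hIA0 _)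
        exact Real.rpow_le_rpow hIABhalf0 cs2 (by norm_num)
    _ = (∫ x, A x ∂μ) ^ (3/4:ℝ) * (∫ x, B x ∂μ) ^ (1/4:ℝ) := by
        rw [Real.mul_rpow (Real.rpow_nonneg hIA0 _) (Real.rpow_nonneg hIB0 _),
          ← Real.rpow_mul hIA0, ← Real.rpow_mul hIB0, ← mul_assoc,
          ← Real.rpow_add' hIA0 (by norm_num)]
        norm_num

noncomputable def Φ : ((ℝ × ℝ) × ℝ) ≃ᵐ EuclideanSpace ℝ (Fin 3) :=
  ((MeasurableEquiv.finTwoArrow.symm.prodCongr (MeasurableEquiv.refl ℝ)).trans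
    ((MeasurableEquiv.prodComm : ((Fin 2 → ℝ) × ℝ) ≃ᵐ (ℝ × (Fin 2 → ℝ))).trans
      ((MeasurableEquiv.piFinSuccAbove (fun _ : Fin 3 => ℝ) 2).symm.trans
        (MeasurableEquiv.toLp 2 (Fin 3 → ℝ)))))

lemma Φ_mp : MeasurePreserving Φ := by
  have h1 : MeasurePreserving (MeasurableEquiv.finTwoArrow.symm.prodCongr
      (MeasurableEquiv.refl ℝ) : ((ℝ×ℝ)×ℝ) ≃ᵐ _) := by
    rw [Measure.volume_eq_prod, Measure.volume_eq_prod]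
    exact ((volume_preserving_finTwoArrow ℝ).symm _).prod (MeasurePreserving.id _)
  have h2 : MeasurePreserving (MeasurableEquiv.prodComm : ((Fin 2 → ℝ) × ℝ) ≃ᵐ _) := by
    rw [Measure.volume_eq_prod, Measure.volume_eq_prod]
    exact Measure.measurePreserving_swap
  have h3 : MeasurePreserving ((MeasurableEquiv.piFinSuccAbove (fun _ : Fin 3 => ℝ) 2).symm) :=
    (volume_preserving_piFinSuccAbove (fun _ : Fin 3 => ℝ) 2).symm _
  have h4 : MeasurePreserving (MeasurableEquiv.toLp 2 (Fin 3 → ℝ)) :=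
    (EuclideanSpace.volume_preserving_symm_measurableEquiv_toLp (Fin 3)).symm _
  exact ((h4.comp h3).comp h2).comp h1

lemma Φ_apply (p : (ℝ × ℝ) × ℝ) :
    Φ p = (WithLp.toLp 2 ![p.1.1, p.1.2, p.2] : EuclideanSpace ℝ (Fin 3)) := by
  ext i
  fin_cases i <;>
    simp [Φ, MeasurableEquiv.trans_apply, MeasurableEquiv.prodCongr, MeasurableEquiv.prodComm,
      MeasurableEquiv.refl, MeasurableEquiv.piFinSuccAbove, MeasurableEquiv.finTwoArrow,
      MeasurableEquiv.piFinTwo, MeasurableEquiv.coe_toLp,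
      Fin.insertNth, Fin.succAboveCases, Fin.insertNthEquiv, Fin.castPred_zero]

/-- Weighted interaction estimate:
`∫∫ |u|² |g(x₃)| ≤ C ‖g‖_{L²(ℝ)} ‖u‖_{L²(ℝ³)}^{3/2} ‖∂₃u‖_{L²(ℝ³)}^{1/2}`. -/
theorem statement18 :
    ∃ C > (0 : ℝ), ∀ (u : 𝓢(EuclideanSpace ℝ (Fin 3), ℂ)) (g : 𝓢(ℝ, ℂ)),
      (∫ xh : ℝ × ℝ, ∫ x₃ : ℝ,
          ‖u (WithLp.toLp 2 ![xh.1, xh.2, x₃] : EuclideanSpace ℝ (Fin 3))‖ ^ 2 * ‖g x₃‖)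
        ≤ C * (∫ x₃ : ℝ, ‖g x₃‖ ^ 2) ^ (1 / 2 : ℝ)
            * ((∫ x : EuclideanSpace ℝ (Fin 3), ‖u x‖ ^ 2) ^ (1 / 2 : ℝ)) ^ (3 / 2 : ℝ)
            * ((∫ x : EuclideanSpace ℝ (Fin 3), ‖vertDeriv (fun y => u y) x‖ ^ 2)
                ^ (1 / 2 : ℝ)) ^ (1 / 2 : ℝ) := by
  refine ⟨Real.sqrt 2, Real.sqrt_pos.mpr (by norm_num), fun u g => ?_⟩
  set v : EuclideanSpace ℝ (Fin 3) := EuclideanSpace.single (2 : Fin 3) (1:ℝ) with hv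
  set D := LineDeriv.lineDerivOp v u with hDdef
  have hvd : (fun x : EuclideanSpace ℝ (Fin 3) => ‖vertDeriv (fun y => u y) x‖ ^ 2)
      = fun x => ‖D x‖ ^ 2 := by
    funext x
    have : vertDeriv (fun y => u y) x = D x := by
      rw [hDdef, SchwartzMap.lineDerivOp_apply_eq_fderiv]; rfl
    rw [this]
  -- Integrability on E of the squares
  have hu2E : Integrable (fun x : EuclideanSpace ℝ (Fin 3) => ‖u x‖ ^ 2) := by
    refine Integrable.mono' (u.integrable.norm.const_mul ((SchwartzMap.seminorm ℝ 0 0) u))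
      ((u.continuous.norm.pow 2).aestronglyMeasurable) ?_
    filter_upwards with x
    rw [Real.norm_eq_abs, abs_of_nonneg (by positivity), sq]
    exact mul_le_mul_of_nonneg_right (norm_le_seminorm ℝ u x) (norm_nonneg _)
  have hd2E : Integrable (fun x : EuclideanSpace ℝ (Fin 3) => ‖D x‖ ^ 2) := by
    refine Integrable.mono' (D.integrable.norm.const_mul ((SchwartzMap.seminorm ℝ 0 0) D))
      ((D.continuous.norm.pow 2).aestronglyMeasurable) ?_
    filter_upwards with x
    rw [Real.norm_eq_abs, abs_of_nonneg (by positivity), sq]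
    exact mul_le_mul_of_nonneg_right (norm_le_seminorm ℝ D x) (norm_nonneg _)
  have hproj : Continuous (fun x : EuclideanSpace ℝ (Fin 3) => x 2) :=
    (EuclideanSpace.proj (2 : Fin 3) : EuclideanSpace ℝ (Fin 3) →L[ℝ] ℝ).continuous
  have hug2E : Integrable (fun x : EuclideanSpace ℝ (Fin 3) => ‖u x‖ ^ 2 * ‖g (x 2)‖) := by
    refine Integrable.mono' (hu2E.const_mul ((SchwartzMap.seminorm ℝ 0 0) g))
      (((u.continuous.norm.pow 2).mul
        ((g.continuous.comp hproj).norm)).aestronglyMeasurable) ?_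
    filter_upwards with x
    rw [Real.norm_eq_abs, abs_of_nonneg (by positivity)]
    calc ‖u x‖ ^ 2 * ‖g (x 2)‖ ≤ ‖u x‖ ^ 2 * (SchwartzMap.seminorm ℝ 0 0) g :=
          mul_le_mul_of_nonneg_left (norm_le_seminorm ℝ g (x 2)) (by positivity)
      _ = (SchwartzMap.seminorm ℝ 0 0) g * ‖u x‖ ^ 2 := mul_comm _ _
  -- transport to the product space
  have hΦe : ∀ p : (ℝ × ℝ) × ℝ, Φ p = e3 p.1.1 p.1.2 p.2 := fun p => Φ_apply p
  have he2 : ∀ a b t : ℝ, e3 a b t 2 = t := fun a b t => rfl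
  have hH1 : Integrable (fun p : (ℝ × ℝ) × ℝ => ‖u (e3 p.1.1 p.1.2 p.2)‖ ^ 2) := by
    have := (Φ_mp.integrable_comp_emb Φ.measurableEmbedding).mpr hu2E
    simp only [Function.comp_def, hΦe] at this
    exact this
  have hH2 : Integrable (fun p : (ℝ × ℝ) × ℝ => ‖D (e3 p.1.1 p.1.2 p.2)‖ ^ 2) := by
    have := (Φ_mp.integrable_comp_emb Φ.measurableEmbedding).mpr hd2E
    simp only [Function.comp_def, hΦe] at this
    exact this
  have hH3 : Integrable (fun p : (ℝ × ℝ) × ℝ => ‖u (e3 p.1.1 p.1.2 p.2)‖ ^ 2 * ‖g p.2‖) := by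
    have := (Φ_mp.integrable_comp_emb Φ.measurableEmbedding).mpr hug2E
    simp only [Function.comp_def, hΦe, he2] at this
    exact this
  have hE1 : (∫ p : (ℝ × ℝ) × ℝ, ‖u (e3 p.1.1 p.1.2 p.2)‖ ^ 2)
      = ∫ x : EuclideanSpace ℝ (Fin 3), ‖u x‖ ^ 2 := by
    have := Φ_mp.integral_comp Φ.measurableEmbedding
      (fun x : EuclideanSpace ℝ (Fin 3) => ‖u x‖ ^ 2)
    simp only [hΦe] at this
    exact this
  have hE2 : (∫ p : (ℝ × ℝ) × ℝ, ‖D (e3 p.1.1 p.1.2 p.2)‖ ^ 2)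
      = ∫ x : EuclideanSpace ℝ (Fin 3), ‖D x‖ ^ 2 := by
    have := Φ_mp.integral_comp Φ.measurableEmbedding
      (fun x : EuclideanSpace ℝ (Fin 3) => ‖D x‖ ^ 2)
    simp only [hΦe] at this
    exact this
  -- slice integrals
  set A : ℝ × ℝ → ℝ := fun xh => ∫ t, ‖u (e3 xh.1 xh.2 t)‖ ^ 2 with hAdef
  set B : ℝ × ℝ → ℝ := fun xh => ∫ t, ‖D (e3 xh.1 xh.2 t)‖ ^ 2 with hBdef
  have hA_int : Integrable A := by
    exact (hH1 : Integrable _ ((volume : Measure (ℝ×ℝ)).prod volume)).integral_prod_left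
  have hB_int : Integrable B := by
    exact (hH2 : Integrable _ ((volume : Measure (ℝ×ℝ)).prod volume)).integral_prod_left
  have hLHS_int : Integrable (fun xh : ℝ × ℝ => ∫ t, ‖u (e3 xh.1 xh.2 t)‖ ^ 2 * ‖g t‖) := by
    exact (hH3 : Integrable _ ((volume : Measure (ℝ×ℝ)).prod volume)).integral_prod_left
  have hA0 : ∀ xh, 0 ≤ A xh := fun xh => integral_nonneg fun t => by positivity
  have hB0 : ∀ xh, 0 ≤ B xh := fun xh => integral_nonneg fun t => by positivity
  have hIu_eq : (∫ xh : ℝ × ℝ, A xh) = ∫ x : EuclideanSpace ℝ (Fin 3), ‖u x‖ ^ 2 := by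
    rw [← hE1]
    exact (integral_prod _ (hH1 : Integrable _ ((volume : Measure (ℝ×ℝ)).prod volume))).symm
  have hID_eq : (∫ xh : ℝ × ℝ, B xh) = ∫ x : EuclideanSpace ℝ (Fin 3), ‖D x‖ ^ 2 := by
    rw [← hE2]
    exact (integral_prod _ (hH2 : Integrable _ ((volume : Measure (ℝ×ℝ)).prod volume))).symm
  set Ig : ℝ := ∫ t : ℝ, ‖g t‖ ^ 2 with hIgdef
  have hIg0 : 0 ≤ Ig := integral_nonneg fun t => by positivity
  have hAB34_int : Integrable (fun xh => (A xh) ^ (3/4:ℝ) * (B xh) ^ (1/4:ℝ)) := by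
    refine Integrable.mono' (hA_int.add hB_int)
      (((cont_rpow_const (3/4) (by norm_num)).comp_aestronglyMeasurable
          hA_int.aestronglyMeasurable).mul
        ((cont_rpow_const (1/4) (by norm_num)).comp_aestronglyMeasurable
          hB_int.aestronglyMeasurable)) ?_
    filter_upwards with xh
    rw [Real.norm_eq_abs, abs_of_nonneg (mul_nonneg (Real.rpow_nonneg (hA0 xh) _)
      (Real.rpow_nonneg (hB0 xh) _))]
    exact rpow_mul_rpow_le_add (hA0 xh) (hB0 xh) (by norm_num) (by norm_num) (by norm_num)
  have hIu0 : (0:ℝ) ≤ ∫ x : EuclideanSpace ℝ (Fin 3), ‖u x‖ ^ 2 :=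
    integral_nonneg fun x => by positivity
  have hID0 : (0:ℝ) ≤ ∫ x : EuclideanSpace ℝ (Fin 3), ‖D x‖ ^ 2 :=
    integral_nonneg fun x => by positivity
  have main : (∫ xh : ℝ × ℝ, ∫ t, ‖u (e3 xh.1 xh.2 t)‖ ^ 2 * ‖g t‖)
      ≤ Real.sqrt 2 * Ig ^ (1/2:ℝ)
        * (∫ x : EuclideanSpace ℝ (Fin 3), ‖u x‖ ^ 2) ^ (3/4:ℝ)
        * (∫ x : EuclideanSpace ℝ (Fin 3), ‖D x‖ ^ 2) ^ (1/4:ℝ) := by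
    calc (∫ xh : ℝ × ℝ, ∫ t, ‖u (e3 xh.1 xh.2 t)‖ ^ 2 * ‖g t‖)
        ≤ ∫ xh : ℝ × ℝ, (Real.sqrt 2 * Ig ^ (1/2:ℝ)) * ((A xh) ^ (3/4:ℝ) * (B xh) ^ (1/4:ℝ)) := by
          refine integral_mono hLHS_int (hAB34_int.const_mul _) fun xh => ?_
          have h := key u g xh.1 xh.2
          calc (∫ t, ‖u (e3 xh.1 xh.2 t)‖ ^ 2 * ‖g t‖)
              ≤ Real.sqrt 2 * Ig ^ (1/2:ℝ) * (A xh) ^ (3/4:ℝ) * (B xh) ^ (1/4:ℝ) := h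
            _ = (Real.sqrt 2 * Ig ^ (1/2:ℝ)) * ((A xh) ^ (3/4:ℝ) * (B xh) ^ (1/4:ℝ)) := by ring
      _ = (Real.sqrt 2 * Ig ^ (1/2:ℝ)) * ∫ xh : ℝ × ℝ, (A xh) ^ (3/4:ℝ) * (B xh) ^ (1/4:ℝ) :=
          integral_const_mul _ _
      _ ≤ (Real.sqrt 2 * Ig ^ (1/2:ℝ))
          * ((∫ xh : ℝ × ℝ, A xh) ^ (3/4:ℝ) * (∫ xh : ℝ × ℝ, B xh) ^ (1/4:ℝ)) := by
          apply mul_le_mul_of_nonneg_left (holder_34 hA_int hB_int hA0 hB0)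
          positivity
      _ = Real.sqrt 2 * Ig ^ (1/2:ℝ)
          * (∫ x : EuclideanSpace ℝ (Fin 3), ‖u x‖ ^ 2) ^ (3/4:ℝ)
          * (∫ x : EuclideanSpace ℝ (Fin 3), ‖D x‖ ^ 2) ^ (1/4:ℝ) := by
          rw [hIu_eq, hID_eq]; ring
  have hfinal : (∫ xh : ℝ × ℝ, ∫ x₃ : ℝ,
      ‖u (WithLp.toLp 2 ![xh.1, xh.2, x₃] : EuclideanSpace ℝ (Fin 3))‖ ^ 2 * ‖g x₃‖)
      = ∫ xh : ℝ × ℝ, ∫ t, ‖u (e3 xh.1 xh.2 t)‖ ^ 2 * ‖g t‖ := rfl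
  rw [hfinal]
  rw [show (∫ x : EuclideanSpace ℝ (Fin 3), ‖vertDeriv (fun y => u y) x‖ ^ 2)
      = ∫ x : EuclideanSpace ℝ (Fin 3), ‖D x‖ ^ 2 from congrArg _ hvd]
  calc (∫ xh : ℝ × ℝ, ∫ t, ‖u (e3 xh.1 xh.2 t)‖ ^ 2 * ‖g t‖)
      ≤ Real.sqrt 2 * Ig ^ (1/2:ℝ)
        * (∫ x : EuclideanSpace ℝ (Fin 3), ‖u x‖ ^ 2) ^ (3/4:ℝ)
        * (∫ x : EuclideanSpace ℝ (Fin 3), ‖D x‖ ^ 2) ^ (1/4:ℝ) := main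
    _ = Real.sqrt 2 * (∫ x₃ : ℝ, ‖g x₃‖ ^ 2) ^ (1/2:ℝ)
        * ((∫ x : EuclideanSpace ℝ (Fin 3), ‖u x‖ ^ 2) ^ (1/2:ℝ)) ^ (3/2:ℝ)
        * ((∫ x : EuclideanSpace ℝ (Fin 3), ‖D x‖ ^ 2) ^ (1/2:ℝ)) ^ (1/2:ℝ) := by
        rw [show (3/4:ℝ) = (1/2) * (3/2) by norm_num, show (1/4:ℝ) = (1/2) * (1/2) by norm_num,
          Real.rpow_mul hIu0, Real.rpow_mul hID0]
end
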